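/- Let X be compact metric, M a metric space, g : X → M continuous, L ⊆ X a subcontinuum with diam g(L) > 0, and suppose every point x in a nonempty subset E ⊆ L satisfying C(x,g) ⊆ B(L,1/2) has a neighborhood U_x in L with C(z,g) ⊆ B(L,1/2) for all z ∈ U_x. Fix x₀ ∈ E and let D be the family of subcontinua D of L containing x₀ such that C(d,g) ⊆ B(L,1/2) for each d ∈ D. If g(D) is a singleton for every D ∈ D, then the closure of the union of D is a member of D, is maximal in D, and equals L — contradicting diam g(L) > 0. Hence there exists D* ∈ D with diam g(D*) > 0. -/

import Mathlib

open Set Metric Filter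

/-- The connected component of a point within a closed set is closed. -/
lemma aux_isClosed_connectedComponentIn {X : Type*} [TopologicalSpace X] {F : Set X}
    (hF : IsClosed F) (x : X) : IsClosed (connectedComponentIn F x) := by
  by_cases hx : x ∈ F
  · refine isClosed_of_closure_subset ?_
    exact (isPreconnected_connectedComponentIn.closure).subset_connectedComponentIn
      (subset_closure (mem_connectedComponentIn hx))
      (closure_minimal (connectedComponentIn_subset F x) hF)
  · rw [connectedComponentIn_eq_empty hx]; exact isClosed_empty

/-- The intersection of a decreasing sequence of compact preconnected sets in a normal T2
space is preconnected. -/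
lemma aux_isPreconnected_iInter {X : Type*} [TopologicalSpace X] [T2Space X] [NormalSpace X]
    (Q : ℕ → Set X) (hdec : ∀ n, Q (n + 1) ⊆ Q n) (hcomp : ∀ n, IsCompact (Q n))
    (hconn : ∀ n, IsPreconnected (Q n)) : IsPreconnected (⋂ n, Q n) := by
  have hcl : ∀ n, IsClosed (Q n) := fun n => (hcomp n).isClosed
  have hT : IsClosed (⋂ n, Q n) := isClosed_iInter hcl
  rw [isPreconnected_iff_subset_of_fully_disjoint_closed hT]
  intro a b ha hb hab hdis
  obtain ⟨u, v, hu, hv, hau, hbv, huv⟩ := normal_separation ha hb hdis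
  obtain ⟨n, hn⟩ : ∃ n, Q n ⊆ u ∪ v := by
    by_contra hcon
    push_neg at hcon
    have hne : ∀ n, (Q n \ (u ∪ v)).Nonempty := by
      intro n
      rcases Set.not_subset.mp (hcon n) with ⟨y, hy1, hy2⟩
      exact ⟨y, hy1, hy2⟩
    obtain ⟨y, hy⟩ := IsCompact.nonempty_iInter_of_sequence_nonempty_isCompact_isClosed
      (fun n => Q n \ (u ∪ v)) (fun n => Set.diff_subset_diff_left (hdec n)) hne
      ((hcomp 0).diff (hu.union hv)) (fun n => (hcl n).sdiff (hu.union hv))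
    have hyT : y ∈ ⋂ n, Q n := mem_iInter.mpr fun n => ((mem_iInter.mp hy) n).1
    have hyuv : y ∈ u ∪ v := by
      rcases hab hyT with h | h
      · exact Or.inl (hau h)
      · exact Or.inr (hbv h)
    exact ((mem_iInter.mp hy) 0).2 hyuv
  have hTQ : (⋂ m, Q m) ⊆ Q n := iInter_subset _ n
  by_cases hque : (Q n ∩ u).Nonempty
  · left
    have hQu : Q n ⊆ u := (hconn n).subset_left_of_subset_union hu hv huv hn hque
    intro y hy
    rcases hab hy with h | h
    · exact h
    · exact absurd (hQu (hTQ hy)) (fun hyu => Set.disjoint_left.mp huv hyu (hbv h))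
  · right
    have hQv : Q n ⊆ v := by
      intro y hy
      rcases hn hy with h | h
      · exact absurd ⟨y, hy, h⟩ hque
      · exact h
    intro y hy
    rcases hab hy with h | h
    · exact absurd (hQv (hTQ hy)) (fun hyv => Set.disjoint_right.mp huv hyv (hau h))
    · exact h

/-- Boundary bumping via clopen sets: in a compact T2 preconnected space, if the connected
component of a point `x` inside a closed set `A` lies in the interior of `A`, then `A` is
everything. -/
lemma aux_bump {Y : Type*} [TopologicalSpace Y] [CompactSpace Y] [T2Space Y]
    [PreconnectedSpace Y] (A : Set Y) (hA : IsClosed A) (x : Y) (hx : x ∈ A)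
    (h : connectedComponentIn A x ⊆ interior A) : A = univ := by
  haveI : CompactSpace ↥A := isCompact_iff_compactSpace.mp hA.isCompact
  set x' : ↥A := ⟨x, hx⟩ with hx'
  set B : Set Y := A \ interior A with hBdef
  have hB : IsClosed B := hA.sdiff isOpen_interior
  set B' : Set ↥A := Subtype.val ⁻¹' B with hB'def
  have hB'closed : IsClosed B' := hB.preimage continuous_subtype_val
  have hB'comp : IsCompact B' := hB'closed.isCompact
  have hdisj : ∀ y : ↥A, y ∈ connectedComponent x' → y ∉ B' := by
    intro y hy hyB
    have h1 : (y : Y) ∈ connectedComponentIn A x := by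
      rw [connectedComponentIn_eq_image hx]
      exact mem_image_of_mem _ hy
    exact hyB.2 (h h1)
  -- cover B' by complements of clopen sets containing x'
  have hcov : B' ⊆ ⋃ s : { s : Set ↥A // IsClopen s ∧ x' ∈ s }, (↑s)ᶜ := by
    intro y hy
    have hy' : y ∉ connectedComponent x' := fun hc => hdisj y hc hy
    rw [connectedComponent_eq_iInter_isClopen] at hy'
    rw [mem_iInter] at hy'
    push_neg at hy'
    obtain ⟨s, hs⟩ := hy'
    exact mem_iUnion.mpr ⟨s, hs⟩
  obtain ⟨t, ht⟩ := hB'comp.elim_finite_subcover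
    (fun s : { s : Set ↥A // IsClopen s ∧ x' ∈ s } => (↑s)ᶜ)
    (fun s => s.2.1.compl.isOpen) hcov
  set Q' : Set ↥A := ⋂ s ∈ t, (s : Set ↥A) with hQ'def
  have hQ'clopen : IsClopen Q' := isClopen_biInter_finset fun s _ => s.2.1
  have hx'Q' : x' ∈ Q' := mem_iInter₂.mpr fun s _ => s.2.2
  have hQ'B' : ∀ y, y ∈ Q' → y ∉ B' := by
    intro y hyQ hyB
    obtain ⟨s, hst, hys⟩ := mem_iUnion₂.mp (ht hyB)
    exact hys (mem_iInter₂.mp hyQ s hst)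
  set Qs : Set Y := Subtype.val '' Q' with hQsdef
  have hQsA : Qs ⊆ A := by
    rintro y ⟨y', _, rfl⟩
    exact y'.2
  have hQsint : Qs ⊆ interior A := by
    rintro y ⟨y', hy', rfl⟩
    by_contra hni
    exact hQ'B' y' hy' ⟨y'.2, hni⟩
  have hQsclosed : IsClosed Qs :=
    (hQ'clopen.1.isCompact.image continuous_subtype_val).isClosed
  obtain ⟨O, hO, hOQ⟩ := isOpen_induced_iff.mp hQ'clopen.2
  have hQs_eq : Qs = O ∩ interior A := by
    apply Subset.antisymm
    · rintro y ⟨y', hy', rfl⟩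
      refine ⟨?_, hQsint ⟨y', hy', rfl⟩⟩
      rw [← hOQ] at hy'
      exact hy'
    · rintro y ⟨hyO, hyint⟩
      have hyA : y ∈ A := interior_subset hyint
      refine ⟨⟨y, hyA⟩, ?_, rfl⟩
      rw [← hOQ]
      exact hyO
  have hQsopen : IsOpen Qs := by
    rw [hQs_eq]
    exact hO.inter isOpen_interior
  have hQsuniv : Qs = univ :=
    IsClopen.eq_univ ⟨hQsclosed, hQsopen⟩ ⟨x, ⟨x', hx'Q', rfl⟩⟩
  apply eq_univ_of_univ_subset
  rw [← hQsuniv]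
  exact hQsA

theorem stmt_13 {X M : Type*} [MetricSpace X] [CompactSpace X] [MetricSpace M]
    (g : X → M) (hg : Continuous g)
    (L : Set X) (hLcomp : IsCompact L) (hLconn : IsConnected L)
    (hLdiam : 0 < Metric.diam (g '' L))
    (E : Set X) (hEL : E ⊆ L) (hEne : E.Nonempty)
    (hE : ∀ x ∈ E, connectedComponentIn (g ⁻¹' {g x}) x ⊆ Metric.thickening (1 / 2) L)
    (hnbhd : ∀ x ∈ E, ∃ U ∈ nhdsWithin x L, ∀ z ∈ U,
      connectedComponentIn (g ⁻¹' {g z}) z ⊆ Metric.thickening (1 / 2) L)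
    (x₀ : X) (hx₀ : x₀ ∈ E) :
    ∃ D : Set X, D ⊆ L ∧ IsCompact D ∧ IsConnected D ∧ x₀ ∈ D ∧
      (∀ d ∈ D, connectedComponentIn (g ⁻¹' {g d}) d ⊆ Metric.thickening (1 / 2) L) ∧
      0 < Metric.diam (g '' D) := by
  have hx₀L : x₀ ∈ L := hEL hx₀
  set ρ : ℝ := Metric.diam (g '' L) with hρ
  set ε : ℕ → ℝ := fun n => min (1 / (n + 1 : ℝ)) (ρ / 4) with hε
  have hεpos : ∀ n, 0 < ε n := by
    intro n
    apply lt_min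
    · positivity
    · positivity
  have hεle : ∀ n, ε n ≤ 1 / (n + 1 : ℝ) := fun n => min_le_left _ _
  have hεleρ : ∀ n, ε n ≤ ρ / 4 := fun n => min_le_right _ _
  have hεanti : ∀ n, ε (n + 1) ≤ ε n := by
    intro n
    apply min_le_min _ le_rfl
    apply one_div_le_one_div_of_le
    · positivity
    · push_cast; linarith
  set G : ℕ → Set X := fun n => g ⁻¹' (closedBall (g x₀) (ε n)) with hG
  have hGclosed : ∀ n, IsClosed (G n) := fun n => isClosed_closedBall.preimage hg
  have hGmono : ∀ n, G (n + 1) ⊆ G n := by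
    intro n y hy
    exact mem_preimage.mpr (closedBall_subset_closedBall (hεanti n) hy)
  have hx₀G : ∀ n, x₀ ∈ G n := by
    intro n
    simp only [hG, mem_preimage, mem_closedBall, dist_self]
    exact (hεpos n).le
  have hx₀LG : ∀ n, x₀ ∈ L ∩ G n := fun n => ⟨hx₀L, hx₀G n⟩
  set Q : ℕ → Set X := fun n => connectedComponentIn (G n) x₀ with hQ
  set K : ℕ → Set X := fun n => connectedComponentIn (L ∩ G n) x₀ with hK
  have hQclosed : ∀ n, IsClosed (Q n) := fun n => aux_isClosed_connectedComponentIn (hGclosed n) x₀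
  have hQcomp : ∀ n, IsCompact (Q n) := fun n => (hQclosed n).isCompact
  have hQdec : ∀ n, Q (n + 1) ⊆ Q n := by
    intro n
    exact isPreconnected_connectedComponentIn.subset_connectedComponentIn
      (mem_connectedComponentIn (hx₀G (n + 1)))
      ((connectedComponentIn_subset _ _).trans (hGmono n))
  have hQanti : Antitone Q := antitone_nat_of_succ_le hQdec
  have hKQ : ∀ n, K n ⊆ Q n := by
    intro n
    exact isPreconnected_connectedComponentIn.subset_connectedComponentIn
      (mem_connectedComponentIn (hx₀LG n))
      ((connectedComponentIn_subset _ _).trans inter_subset_right)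
  -- Step 1 : there is n₀ such that every point of K n₀ has its fiber component in the thickening
  have key : ∃ n, ∀ z ∈ K n,
      connectedComponentIn (g ⁻¹' {g z}) z ⊆ Metric.thickening (1 / 2) L := by
    by_contra hcon
    push_neg at hcon
    choose z hzK hz using hcon
    have hw : ∀ n, ∃ w ∈ connectedComponentIn (g ⁻¹' {g (z n)}) (z n),
        w ∉ Metric.thickening (1 / 2) L := fun n => Set.not_subset.mp (hz n)
    choose w hwC hwB using hw
    have hzQ : ∀ n, z n ∈ Q n := fun n => hKQ n (hzK n)
    have hwQ : ∀ n, w n ∈ Q n := by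
      intro n
      have hzG : z n ∈ G n := ((connectedComponentIn_subset _ _) (hzK n)).2
      have h1 : g ⁻¹' {g (z n)} ⊆ G n := by
        intro y hy
        simp only [mem_preimage, mem_singleton_iff] at hy
        simp only [hG, mem_preimage, mem_closedBall, hy]
        exact hzG
      have h2 := connectedComponentIn_mono (z n) h1
      have h3 : connectedComponentIn (G n) (z n) = Q n := (connectedComponentIn_eq (hzQ n)).symm
      rw [← h3]
      exact h2 (hwC n)
    obtain ⟨p, -, φ, hφ, hp⟩ := isCompact_univ.tendsto_subseq (fun n => mem_univ (w n))
    have hpQ : ∀ n, p ∈ Q n := by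
      intro n
      refine (hQclosed n).mem_of_tendsto hp ?_
      refine eventually_atTop.mpr ⟨n, fun m hm => ?_⟩
      exact hQanti (hm.trans hφ.le_apply) (hwQ (φ m))
    have hpB : p ∉ Metric.thickening (1 / 2) L := by
      have hclosed : IsClosed (Metric.thickening (1 / 2) L)ᶜ :=
        Metric.isOpen_thickening.isClosed_compl
      have : p ∈ (Metric.thickening (1 / 2) L)ᶜ := by
        refine hclosed.mem_of_tendsto hp ?_
        exact Eventually.of_forall fun m => hwB (φ m)
      exact this
    -- the intersection of the Q n is a connected subset of the fiber of x₀
    have hTpre : IsPreconnected (⋂ n, Q n) :=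
      aux_isPreconnected_iInter Q hQdec hQcomp (fun n => isPreconnected_connectedComponentIn)
    have hTfiber : (⋂ n, Q n) ⊆ g ⁻¹' {g x₀} := by
      intro y hy
      have hdist : ∀ n : ℕ, dist (g y) (g x₀) ≤ 1 / ((n : ℝ) + 1) := by
        intro n
        have := (mem_iInter.mp hy n)
        have hyG : y ∈ G n := connectedComponentIn_subset _ _ this
        exact le_trans (mem_closedBall.mp hyG) (hεle n)
      have hle : dist (g y) (g x₀) ≤ 0 :=
        ge_of_tendsto' tendsto_one_div_add_atTop_nhds_zero_nat hdist
      simp only [mem_preimage, mem_singleton_iff]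
      exact dist_le_zero.mp hle
    have hTsub : (⋂ n, Q n) ⊆ connectedComponentIn (g ⁻¹' {g x₀}) x₀ :=
      hTpre.subset_connectedComponentIn
        (mem_iInter.mpr fun n => mem_connectedComponentIn (hx₀G n)) hTfiber
    have hpT : p ∈ ⋂ n, Q n := mem_iInter.mpr hpQ
    exact hpB (hE x₀ hx₀ (hTsub hpT))
  obtain ⟨n₀, hgood⟩ := key
  -- The candidate continuum
  refine ⟨K n₀, (connectedComponentIn_subset _ _).trans inter_subset_left, ?_, ?_, ?_, hgood, ?_⟩
  · -- compactness
    have hA : IsCompact (L ∩ G n₀) := hLcomp.inter_right (hGclosed n₀)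
    exact hA.of_isClosed_subset
      (aux_isClosed_connectedComponentIn (hLcomp.isClosed.inter (hGclosed n₀)) x₀)
      (connectedComponentIn_subset _ _)
  · exact isConnected_connectedComponentIn_iff.mpr (hx₀LG n₀)
  · exact mem_connectedComponentIn (hx₀LG n₀)
  · -- positivity of the diameter
    by_cases hconst : ∀ d ∈ K n₀, g d = g x₀
    · -- if g is constant on K n₀, boundary bumping gives a contradiction with diam (g '' L) > 0
      exfalso
      haveI : CompactSpace ↥L := isCompact_iff_compactSpace.mp hLcomp
      haveI : PreconnectedSpace ↥L := Subtype.preconnectedSpace hLconn.isPreconnected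
      set A : Set ↥L := (fun y : ↥L => g ↑y) ⁻¹' (closedBall (g x₀) (ε n₀)) with hA
      have hgL : Continuous fun y : ↥L => g ↑y := hg.comp continuous_subtype_val
      have hAclosed : IsClosed A := isClosed_closedBall.preimage hgL
      set x' : ↥L := ⟨x₀, hx₀L⟩ with hx'
      have hx'A : x' ∈ A := by
        simp only [hA, mem_preimage, mem_closedBall, dist_self]
        exact (dist_self (g x₀)).le.trans (hεpos n₀).le
      have hsub : connectedComponentIn A x' ⊆ interior A := by
        have himg : Subtype.val '' connectedComponentIn A x' ⊆ K n₀ := by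
          apply IsPreconnected.subset_connectedComponentIn
          · exact isPreconnected_connectedComponentIn.image _
              continuous_subtype_val.continuousOn
          · exact ⟨x', mem_connectedComponentIn hx'A, rfl⟩
          · rintro y ⟨y', hy', rfl⟩
            have hy'A : y' ∈ A := (connectedComponentIn_subset A x') hy'
            exact ⟨y'.2, mem_preimage.mpr (mem_preimage.mp hy'A)⟩
        intro y hy
        have hyc : g ↑y = g x₀ := hconst ↑y (himg (mem_image_of_mem _ hy))
        have hball : y ∈ (fun y : ↥L => g ↑y) ⁻¹' (ball (g x₀) (ε n₀)) := by
          simp only [mem_preimage, mem_ball, hyc, dist_self]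
          exact hεpos n₀
        exact interior_maximal
          (fun u hu => mem_preimage.mpr (ball_subset_closedBall (mem_preimage.mp hu)))
          (isOpen_ball.preimage hgL) hball
      have hAuniv : A = univ := aux_bump A hAclosed x' hx'A hsub
      -- hence every value of g on L is within ε n₀ of g x₀, bounding the diameter
      have hbound : ∀ y ∈ L, dist (g y) (g x₀) ≤ ε n₀ := by
        intro y hy
        have : (⟨y, hy⟩ : ↥L) ∈ A := by rw [hAuniv]; trivial
        exact mem_closedBall.mp this
      have hdiam : Metric.diam (g '' L) ≤ ρ / 2 := by
        apply Metric.diam_le_of_forall_dist_le (by positivity)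
        rintro a ⟨ya, hya, rfl⟩ b ⟨yb, hyb, rfl⟩
        have h1 := hbound ya hya
        have h2 := hbound yb hyb
        have h3 := hεleρ n₀
        calc dist (g ya) (g yb) ≤ dist (g ya) (g x₀) + dist (g x₀) (g yb) := dist_triangle _ _ _
          _ ≤ ε n₀ + ε n₀ := by rw [dist_comm (g x₀)]; exact add_le_add h1 h2
          _ ≤ ρ / 2 := by linarith
      rw [← hρ] at hdiam
      linarith
    · push_neg at hconst
      obtain ⟨d, hd, hgd⟩ := hconst
      have hx₀K : x₀ ∈ K n₀ := mem_connectedComponentIn (hx₀LG n₀)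
      have hDcomp : IsCompact (K n₀) := by
        have hA : IsCompact (L ∩ G n₀) := hLcomp.inter_right (hGclosed n₀)
        exact hA.of_isClosed_subset
          (aux_isClosed_connectedComponentIn (hLcomp.isClosed.inter (hGclosed n₀)) x₀)
          (connectedComponentIn_subset _ _)
      have hbdd := (hDcomp.image hg).isBounded
      calc (0 : ℝ) < dist (g d) (g x₀) := dist_pos.mpr hgd
        _ ≤ Metric.diam (g '' K n₀) :=
          Metric.dist_le_diam_of_mem hbdd (mem_image_of_mem g hd) (mem_image_of_mem g hx₀K)
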